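/- Let σ_D, σ_M > 0 be the minimum singular values of positive definite matrices D and M, and let the off-diagonal entries of symmetric positive definite B be bounded in ℓ₁ norm by a constant C. Then the function CO(B) = ‖DBM‖_F² − 2 log det B is coercive: CO(B) → ∞ as ‖B‖₂ → ∞ over this constraint set. -/

import Mathlib

open Matrix
open Finset in
section


-- lower bound for the quadratic image of an invertible (pos. def.) matrix
lemma aux_mulVec_lb {p : ℕ} (hp : 0 < p) (A : Matrix (Fin p) (Fin p) ℝ) (hA : A.PosDef) :
    ∃ ε : ℝ, 0 < ε ∧ ∀ v : Fin p → ℝ,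
      ε * ∑ i, v i ^ 2 ≤ ∑ i, (A.mulVec v i) ^ 2 := by
  haveI : NeZero p := ⟨hp.ne'⟩
  set L : EuclideanSpace ℝ (Fin p) →L[ℝ] EuclideanSpace ℝ (Fin p) :=
    Matrix.toEuclideanCLM (𝕜 := ℝ) A with hL
  set L' : EuclideanSpace ℝ (Fin p) →L[ℝ] EuclideanSpace ℝ (Fin p) :=
    Matrix.toEuclideanCLM (𝕜 := ℝ) A⁻¹ with hL'
  have hmul : L' * L = 1 := by
    rw [hL, hL', ← _root_.map_mul]
    rw [Matrix.nonsing_inv_mul A (Matrix.isUnit_iff_isUnit_det A |>.mp hA.isUnit)]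
    exact map_one _
  have hnorm : ∀ x : EuclideanSpace ℝ (Fin p), ‖x‖ ≤ ‖L'‖ * ‖L x‖ := by
    intro x
    have : L' (L x) = x := by
      have := congrArg (fun T => T x) hmul
      simpa using this
    calc ‖x‖ = ‖L' (L x)‖ := by rw [this]
    _ ≤ ‖L'‖ * ‖L x‖ := L'.le_opNorm _
  have hL'pos : 0 < ‖L'‖ := by
    rcases eq_or_lt_of_le (norm_nonneg L') with h | h
    · exfalso
      have : L' = 0 := by rwa [eq_comm, norm_eq_zero] at h
      rw [this, zero_mul] at hmul
      exact one_ne_zero hmul.symm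
    · exact h
  refine ⟨(‖L'‖ ^ 2)⁻¹, by positivity, fun v => ?_⟩
  set x : EuclideanSpace ℝ (Fin p) := (WithLp.equiv 2 _).symm v with hx
  have hxn : ‖x‖ ^ 2 = ∑ i, v i ^ 2 := by
    rw [EuclideanSpace.norm_eq, Real.sq_sqrt (by positivity)]
    simp [hx, Real.norm_eq_abs, sq_abs]
  have hLx : L x = (WithLp.equiv 2 _).symm (A.mulVec v) := by
    rw [hx, hL]; rfl
  have hLxn : ‖L x‖ ^ 2 = ∑ i, (A.mulVec v i) ^ 2 := by
    rw [hLx, EuclideanSpace.norm_eq, Real.sq_sqrt (by positivity)]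
    simp [Real.norm_eq_abs, sq_abs]
  have h1 : ‖x‖ ^ 2 ≤ ‖L'‖ ^ 2 * ‖L x‖ ^ 2 := by
    have := hnorm x
    nlinarith [norm_nonneg x, norm_nonneg (L x), hL'pos]
  rw [← hxn, ← hLxn]
  rw [inv_mul_le_iff₀ (by positivity)]
  linarith [h1]

-- operator norm squared bounded by sum of squares of entries
lemma aux_opNorm_sq_le {p : ℕ} (B : Matrix (Fin p) (Fin p) ℝ) :
    ‖Matrix.toEuclideanCLM (𝕜 := ℝ) B‖ ^ 2 ≤ ∑ i, ∑ j, (B i j) ^ 2 := by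
  set S := ∑ i, ∑ j, (B i j) ^ 2 with hS
  have hS0 : 0 ≤ S := by positivity
  have key : ‖Matrix.toEuclideanCLM (𝕜 := ℝ) B‖ ≤ Real.sqrt S := by
    apply ContinuousLinearMap.opNorm_le_bound _ (Real.sqrt_nonneg _)
    intro x
    set v : Fin p → ℝ := WithLp.equiv 2 _ x with hv
    have hxv : x = (WithLp.equiv 2 _).symm v := by simp [hv]
    have hLx : Matrix.toEuclideanCLM (𝕜 := ℝ) B x = (WithLp.equiv 2 _).symm (B.mulVec v) := by
      rw [hxv]; rfl
    have hxn : ‖x‖ ^ 2 = ∑ i, v i ^ 2 := by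
      rw [hxv, EuclideanSpace.norm_eq, Real.sq_sqrt (by positivity)]
      simp [Real.norm_eq_abs, sq_abs]
    have hLxn : ‖Matrix.toEuclideanCLM (𝕜 := ℝ) B x‖ ^ 2 = ∑ i, (B.mulVec v i) ^ 2 := by
      rw [hLx, EuclideanSpace.norm_eq, Real.sq_sqrt (by positivity)]
      simp [Real.norm_eq_abs, sq_abs]
    have hsq : ∑ i, (B.mulVec v i) ^ 2 ≤ S * ∑ i, v i ^ 2 := by
      rw [hS, Finset.sum_mul]
      apply Finset.sum_le_sum
      intro i _
      calc (B.mulVec v i) ^ 2 = (∑ j, B i j * v j) ^ 2 := by rfl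
      _ ≤ (∑ j, (B i j) ^ 2) * ∑ j, v j ^ 2 :=
          Finset.sum_mul_sq_le_sq_mul_sq _ _ _
    have h1 : ‖Matrix.toEuclideanCLM (𝕜 := ℝ) B x‖ ^ 2 ≤ (Real.sqrt S * ‖x‖) ^ 2 := by
      rw [mul_pow, Real.sq_sqrt hS0, hLxn, hxn]
      exact hsq
    have h2 : 0 ≤ Real.sqrt S * ‖x‖ := by positivity
    nlinarith [norm_nonneg (Matrix.toEuclideanCLM (𝕜 := ℝ) B x)]
  nlinarith [norm_nonneg (Matrix.toEuclideanCLM (𝕜 := ℝ) B), Real.sq_sqrt hS0,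
    Real.sqrt_nonneg S]

-- log det bound via eigenvalues
lemma aux_log_det_le {p : ℕ} (B : Matrix (Fin p) (Fin p) ℝ) (hB : B.PosDef) :
    Real.log B.det ≤ ∑ i, B i i := by
  have hH := hB.isHermitian
  have hev : ∀ i, 0 < hH.eigenvalues i := hB.eigenvalues_pos
  have hdet : B.det = ∏ i, hH.eigenvalues i := by
    simpa using hH.det_eq_prod_eigenvalues
  have htr : ∑ i, B i i = ∑ i, hH.eigenvalues i := by
    have hspec := hH.spectral_theorem
    have h1 : B.trace = (Matrix.diagonal (RCLike.ofReal ∘ hH.eigenvalues) : Matrix (Fin p) (Fin p) ℝ).trace := by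
      conv_lhs => rw [hspec]
      rw [Unitary.conjStarAlgAut_apply]
      rw [Matrix.trace_mul_comm, ← Matrix.mul_assoc,
        Matrix.mem_unitaryGroup_iff'.mp (hH.eigenvectorUnitary).2, Matrix.one_mul]
    have h2 := h1
    rw [Matrix.trace_diagonal] at h2
    simpa [Matrix.trace] using h2
  rw [hdet, Real.log_prod (fun i _ => (hev i).ne'), htr]
  apply Finset.sum_le_sum
  intro i _
  linarith [Real.log_le_sub_one_of_pos (hev i)]
end

/-- Coercivity of `CO(B) = ‖D B M‖_F² − 2 log det B` over the set of
symmetric positive definite matrices whose off-diagonal entries have ℓ₁ norm at most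
`C`: for every level `c` there is a radius `R` such that every such `B` with operator
norm `‖B‖₂ ≥ R` has `CO(B) ≥ c`. -/
theorem coercive_CO {p : ℕ} (D M : Matrix (Fin p) (Fin p) ℝ)
    (hD : D.PosDef) (hM : M.PosDef) (C : ℝ) (hC : 0 < C) :
    ∀ c : ℝ, ∃ R : ℝ, ∀ B : Matrix (Fin p) (Fin p) ℝ,
      B.IsSymm → B.PosDef →
      (∑ i : Fin p, ∑ j : Fin p, if i ≠ j then |B i j| else 0) ≤ C →
      R ≤ ‖Matrix.toEuclideanCLM (𝕜 := ℝ) B‖ →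
      c ≤ (∑ i : Fin p, ∑ j : Fin p, ((D * B * M) i j) ^ 2)
            - 2 * Real.log B.det := by
  intro c
  rcases Nat.eq_zero_or_pos p with hp0 | hp
  · subst hp0
    refine ⟨1, fun B _ _ _ hR => ?_⟩
    exfalso
    have hz : Matrix.toEuclideanCLM (𝕜 := ℝ) B = 0 := by
      ext x i
      exact absurd i.2 (by omega)
    rw [hz, norm_zero] at hR
    linarith
  obtain ⟨εd, hεd, hDlb⟩ := aux_mulVec_lb hp D hD
  obtain ⟨εm, hεm, hMlb⟩ := aux_mulVec_lb hp Mᵀ hM.transpose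
  set α := εd * εm with hα
  have hαpos : 0 < α := mul_pos hεd hεm
  set K := C ^ 2 + (2 / α) * (|c| + 2 * p / α + 1) with hK
  have hK0 : 0 ≤ K := by positivity
  refine ⟨max 1 (Real.sqrt K), fun B hBsymm hBpd hBoff hR => ?_⟩
  -- Step 1 : Frobenius lower bound through D and M
  have step1 : α * ∑ k, ∑ l, (B k l) ^ 2 ≤ ∑ i, ∑ j, ((D * B * M) i j) ^ 2 := by
    have h1 : ∀ j, εd * ∑ k, ((B * M) k j) ^ 2 ≤ ∑ i, ((D * (B * M)) i j) ^ 2 := by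
      intro j
      have h := hDlb (fun k => (B * M) k j)
      simpa [Matrix.mulVec, Matrix.mul_apply, dotProduct] using h
    have h2 : ∀ k, εm * ∑ l, (B k l) ^ 2 ≤ ∑ j, ((B * M) k j) ^ 2 := by
      intro k
      have h := hMlb (fun l => B k l)
      have e : ∀ j, Mᵀ.mulVec (fun l => B k l) j = (B * M) k j := by
        intro j
        simp [Matrix.mulVec, Matrix.mul_apply, dotProduct,
          Matrix.transpose_apply, mul_comm]
      calc εm * ∑ l, (B k l) ^ 2 ≤ ∑ j, (Mᵀ.mulVec (fun l => B k l) j) ^ 2 := h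
      _ = ∑ j, ((B * M) k j) ^ 2 := by simp only [e]
    calc α * ∑ k, ∑ l, (B k l) ^ 2 = εd * ∑ k, εm * ∑ l, (B k l) ^ 2 := by
          simp only [Finset.mul_sum]
          exact Finset.sum_congr rfl fun k _ => Finset.sum_congr rfl fun l _ => by ring
    _ ≤ εd * ∑ k, ∑ j, ((B * M) k j) ^ 2 :=
        mul_le_mul_of_nonneg_left (Finset.sum_le_sum fun k _ => h2 k) hεd.le
    _ = εd * ∑ j, ∑ k, ((B * M) k j) ^ 2 := by rw [Finset.sum_comm]
    _ = ∑ j, εd * ∑ k, ((B * M) k j) ^ 2 := Finset.mul_sum _ _ _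
    _ ≤ ∑ j, ∑ i, ((D * (B * M)) i j) ^ 2 := Finset.sum_le_sum fun j _ => h1 j
    _ = ∑ i, ∑ j, ((D * B * M) i j) ^ 2 := by rw [Finset.sum_comm, Matrix.mul_assoc]
  -- Step 2 : diagonal dominates
  have hdiag_le : ∑ i, (B i i) ^ 2 ≤ ∑ i, ∑ j, (B i j) ^ 2 :=
    Finset.sum_le_sum fun i _ =>
      Finset.single_le_sum (f := fun j => (B i j) ^ 2)
        (fun j _ => sq_nonneg _) (Finset.mem_univ i)
  -- Step 3 : lower bound on diagonal squares from the operator norm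
  have hsplit : ∑ i, ∑ j, (B i j) ^ 2
      = ∑ i, (B i i) ^ 2 + ∑ i, ∑ j, (if i ≠ j then (B i j) ^ 2 else 0) := by
    rw [← Finset.sum_add_distrib]
    apply Finset.sum_congr rfl
    intro i _
    calc ∑ j, (B i j) ^ 2
        = ∑ j, ((if i = j then (B i j) ^ 2 else 0) + (if i ≠ j then (B i j) ^ 2 else 0)) := by
          apply Finset.sum_congr rfl; intro j _; by_cases h : i = j <;> simp [h]
    _ = (B i i) ^ 2 + ∑ j, (if i ≠ j then (B i j) ^ 2 else 0) := by
          rw [Finset.sum_add_distrib, Finset.sum_ite_eq]; simp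
  have habs : ∀ i j, i ≠ j → |B i j| ≤ C := by
    intro i j hij
    calc |B i j| ≤ ∑ j', (if i ≠ j' then |B i j'| else 0) := by
          have h := Finset.single_le_sum (f := fun j' => if i ≠ j' then |B i j'| else 0)
            (fun j' _ => by by_cases h : i ≠ j' <;> simp [h, abs_nonneg]) (Finset.mem_univ j)
          simpa [hij] using h
    _ ≤ ∑ i', ∑ j', (if i' ≠ j' then |B i' j'| else 0) :=
          Finset.single_le_sum (f := fun i' => ∑ j', (if i' ≠ j' then |B i' j'| else 0))
            (fun i' _ => Finset.sum_nonneg fun j' _ => by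
              by_cases h : i' ≠ j' <;> simp [h, abs_nonneg]) (Finset.mem_univ i)
    _ ≤ C := hBoff
  have hoffsq : ∑ i, ∑ j, (if i ≠ j then (B i j) ^ 2 else 0) ≤ C ^ 2 := by
    calc ∑ i, ∑ j, (if i ≠ j then (B i j) ^ 2 else 0)
        ≤ ∑ i, ∑ j, (if i ≠ j then |B i j| else 0) * C := by
          apply Finset.sum_le_sum; intro i _
          apply Finset.sum_le_sum; intro j _
          by_cases h : i ≠ j
          · simp only [if_pos h]
            calc (B i j) ^ 2 = |B i j| * |B i j| := by
                  rw [abs_mul_abs_self]; ring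
            _ ≤ |B i j| * C := mul_le_mul_of_nonneg_left (habs i j h) (abs_nonneg _)
          · simp [h]
    _ = (∑ i, ∑ j, (if i ≠ j then |B i j| else 0)) * C := by
          rw [Finset.sum_mul]
          apply Finset.sum_congr rfl; intro i _; rw [Finset.sum_mul]
    _ ≤ C * C := mul_le_mul_of_nonneg_right hBoff hC.le
    _ = C ^ 2 := (sq C).symm
  have hRK : K ≤ ‖Matrix.toEuclideanCLM (𝕜 := ℝ) B‖ ^ 2 := by
    have h := le_trans (le_max_right 1 (Real.sqrt K)) hR
    nlinarith [Real.sq_sqrt hK0, Real.sqrt_nonneg K]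
  have hdiag_lb : K - C ^ 2 ≤ ∑ i, (B i i) ^ 2 := by
    have haux := aux_opNorm_sq_le B
    linarith [hsplit, hoffsq, hRK]
  -- Step 4 : log det bound
  have hlog : Real.log B.det ≤ ∑ i, B i i := aux_log_det_le B hBpd
  -- Step 5 : putting it together
  have h2a : (2 / α) * α = 2 := div_mul_cancel₀ 2 hαpos.ne'
  have hterm : ∀ i : Fin p, (α / 2) * (B i i) ^ 2 - 2 / α ≤ α * (B i i) ^ 2 - 2 * (B i i) := by
    intro i
    nlinarith [sq_nonneg (α * B i i - 2), hαpos, h2a]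
  have hsum : (α / 2) * (∑ i, (B i i) ^ 2) - (p : ℝ) * (2 / α)
      ≤ ∑ i, (α * (B i i) ^ 2 - 2 * (B i i)) := by
    have h := Finset.sum_le_sum (fun i (_ : i ∈ Finset.univ) => hterm i)
    calc (α / 2) * (∑ i, (B i i) ^ 2) - (p : ℝ) * (2 / α)
        = ∑ i : Fin p, ((α / 2) * (B i i) ^ 2 - 2 / α) := by
          rw [Finset.sum_sub_distrib, ← Finset.mul_sum, Finset.sum_const,
            Finset.card_univ, Fintype.card_fin, nsmul_eq_mul]
    _ ≤ _ := h
  have hsum2 : ∑ i, (α * (B i i) ^ 2 - 2 * (B i i))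
      = α * (∑ i, (B i i) ^ 2) - 2 * ∑ i, B i i := by
    rw [Finset.sum_sub_distrib, ← Finset.mul_sum, ← Finset.mul_sum]
  have hmono : α * (∑ i, (B i i) ^ 2) ≤ α * ∑ k, ∑ l, (B k l) ^ 2 :=
    mul_le_mul_of_nonneg_left hdiag_le hαpos.le
  have hmul := mul_le_mul_of_nonneg_left hdiag_lb (by positivity : (0:ℝ) ≤ α / 2)
  have hKval : (α / 2) * (K - C ^ 2) = |c| + 2 * p / α + 1 := by
    rw [hK]; field_simp; ring
  have habsc : c ≤ |c| := le_abs_self c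
  clear_value α K
  have e1 : |c| + 2 * (p:ℝ) / α + 1 ≤ α / 2 * ∑ i, (B i i) ^ 2 := by linarith
  have e2 : α / 2 * (∑ i, (B i i) ^ 2) - (p:ℝ) * (2 / α)
      ≤ (∑ i, ∑ j, ((D * B * M) i j) ^ 2) - 2 * ∑ i, B i i := by linarith
  have e3 : (2:ℝ) * (p:ℝ) / α = (p:ℝ) * (2 / α) := by ring
  linarith
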